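/- Let X ≠ {0} be an F-space (complete metrizable topological vector space) and T a continuous linear operator on X. Then there is no vector x ∈ X such that for every non-empty open set U ⊆ X, the set N(x,U) = {n ∈ ℕ : Tⁿx ∈ U} has upper Banach density equal to 1. -/

import Mathlib

open Filter

noncomputable def upperCount (A : Set ℕ) (s : ℕ) : ℝ :=
  limsup (fun k : ℕ => ((A ∩ Set.Icc (k + 1) (k + s)).ncard : ℝ)) atTop

noncomputable def upperBanachDensity (A : Set ℕ) : ℝ :=
  limsup (fun s : ℕ => upperCount A s / s) atTop

/-- If `A` contains no two consecutive integers, then any window of length `s`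
contains at most `(s+1)/2` elements of `A`. -/
lemma count_le_of_no_consec {A : Set ℕ} (hA : ¬ ∃ n, n ∈ A ∧ n + 1 ∈ A)
    (k s : ℕ) : ((A ∩ Set.Icc (k + 1) (k + s)).ncard : ℝ) ≤ (s + 1) / 2 := by
  set B := A ∩ Set.Icc (k + 1) (k + s) with hB
  have hBsub : B ⊆ Set.Icc (k + 1) (k + s) := Set.inter_subset_right
  have hBfin : B.Finite := (Set.finite_Icc _ _).subset hBsub
  have himfin : ((· + 1) '' B).Finite := hBfin.image _
  have hdisj : Disjoint B ((· + 1) '' B) := by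
    rw [Set.disjoint_left]
    rintro n hn ⟨m, hm, rfl⟩
    exact hA ⟨m, hm.1, hn.1⟩
  have hsub : B ∪ ((· + 1) '' B) ⊆ Set.Icc (k + 1) (k + s + 1) := by
    rintro n (hn | ⟨m, hm, rfl⟩)
    · exact ⟨(hBsub hn).1, le_trans (hBsub hn).2 (Nat.le_succ _)⟩
    · have h := hBsub hm
      simp only [Set.mem_Icc] at h ⊢
      omega
  have hcard : B.ncard + B.ncard ≤ s + 1 := by
    have him : ((· + 1) '' B).ncard = B.ncard :=
      Set.ncard_image_of_injective _ (add_left_injective 1)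
    have hun : (B ∪ (· + 1) '' B).ncard = B.ncard + ((· + 1) '' B).ncard :=
      Set.ncard_union_eq hdisj hBfin himfin
    have hle : (B ∪ (· + 1) '' B).ncard ≤ (Set.Icc (k + 1) (k + s + 1)).ncard :=
      Set.ncard_le_ncard hsub (Set.finite_Icc _ _)
    have hIcc : (Set.Icc (k + 1) (k + s + 1)).ncard = s + 1 := by
      rw [← Finset.coe_Icc, Set.ncard_coe_finset, Nat.card_Icc]
      omega
    omega
  have : (B.ncard : ℝ) + B.ncard ≤ (s : ℝ) + 1 := by exact_mod_cast hcard
  linarith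

lemma no_consec_density_lt {A : Set ℕ} (hA : ¬ ∃ n, n ∈ A ∧ n + 1 ∈ A) :
    upperBanachDensity A ≠ 1 := by
  have hupper : ∀ s : ℕ, upperCount A s ≤ (s + 1) / 2 := fun s =>
    limsup_le_of_le
      (isCoboundedUnder_le_of_le atTop fun k => by positivity)
      (Eventually.of_forall fun k => count_le_of_no_consec hA k s)
  have hnonneg : ∀ s : ℕ, 0 ≤ upperCount A s := fun s =>
    le_limsup_of_frequently_le
      (Frequently.of_forall fun k => by positivity)
      (isBoundedUnder_of ⟨((s : ℝ) + 1) / 2, fun k => count_le_of_no_consec hA k s⟩)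
  have hmain : upperBanachDensity A ≤ 3 / 4 := by
    apply limsup_le_of_le
    · exact isCoboundedUnder_le_of_le atTop fun s =>
        div_nonneg (hnonneg s) (Nat.cast_nonneg s)
    · filter_upwards [eventually_ge_atTop 2] with s hs
      have hs2 : (2 : ℝ) ≤ s := by exact_mod_cast hs
      have h1 : upperCount A s / s ≤ (((s : ℝ) + 1) / 2) / s :=
        div_le_div_of_nonneg_right (hupper s) (by linarith) |>.trans_eq rfl
      have h2 : (((s : ℝ) + 1) / 2) / s ≤ 3 / 4 := by
        rw [div_le_div_iff₀ (by linarith) (by norm_num)]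
        nlinarith
      linarith
  intro h
  rw [h] at hmain
  norm_num at hmain

/-- On a non-zero F-space, no operator has a vector all of whose return-time sets to
non-empty open sets have upper Banach density `1`. -/
theorem no_orbit_with_thick_return_sets {X : Type*} [AddCommGroup X] [Module ℝ X]
    [UniformSpace X] [IsUniformAddGroup X] [ContinuousSMul ℝ X] [CompleteSpace X]
    [TopologicalSpace.MetrizableSpace X] [Nontrivial X]
    (T : X →L[ℝ] X) :
    ¬ ∃ x : X, ∀ U : Set X, IsOpen U → U.Nonempty →
        upperBanachDensity {n : ℕ | (T ^ n) x ∈ U} = 1 := by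
  letI := TopologicalSpace.metrizableSpaceMetric X
  rintro ⟨x, hx⟩
  have hthick : ∀ U : Set X, IsOpen U → U.Nonempty →
      ∃ n : ℕ, (T ^ n) x ∈ U ∧ (T ^ (n + 1)) x ∈ U := by
    intro U hU hUne
    by_contra h
    exact no_consec_density_lt (by simpa using h) (hx U hU hUne)
  by_cases hfix : ∀ y : X, T y = y
  · -- T is the identity: orbit is constant, but it must visit a set avoiding x
    have horbit : ∀ n : ℕ, (T ^ n) x = x := by
      intro n
      induction n with
      | zero => rfl
      | succ n ih => rw [pow_succ, ContinuousLinearMap.mul_apply, hfix, ih]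
    obtain ⟨y, hy⟩ := exists_ne x
    obtain ⟨n, hn, -⟩ := hthick {x}ᶜ isOpen_compl_singleton ⟨y, hy⟩
    rw [horbit] at hn
    exact hn rfl
  · push_neg at hfix
    obtain ⟨z, hz⟩ := hfix
    obtain ⟨W, V, hW, hV, hTzW, hzV, hWV⟩ := t2_separation hz
    set U := V ∩ T ⁻¹' W with hUdef
    have hUopen : IsOpen U := hV.inter (hW.preimage T.continuous)
    have hUne : U.Nonempty := ⟨z, hzV, hTzW⟩
    obtain ⟨n, hn, hn1⟩ := hthick U hUopen hUne
    have h1 : (T ^ (n + 1)) x ∈ W := by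
      rw [pow_succ', ContinuousLinearMap.mul_apply]
      exact hn.2
    have h2 : (T ^ (n + 1)) x ∈ V := hn1.1
    exact Set.disjoint_left.mp hWV h1 h2
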